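/- Let m be an even positive integer and c an m-cycle in S_n. The decompositions c = σ·τ (with σ a product of m/2 disjoint transpositions and τ a product of m/2 - 1 disjoint transpositions, both supported in the support of c) are in bijection with the orbits {x, c^{m/2}(x)} of the involution c^{m/2} on the support of c. -/

import Mathlib

open Equiv Equiv.Perm Finset

lemma aux_prod_fix {α : Type*} (l : List (Equiv.Perm α)) (x : α)
    (h : ∀ t ∈ l, t x = x) : l.prod x = x := by
  induction l with
  | nil => simp
  | cons a l ih =>
    rw [List.prod_cons, Equiv.Perm.mul_apply,
      ih (fun t ht => h t (List.mem_cons_of_mem _ ht)), h a List.mem_cons_self]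

lemma aux_prod_apply_mem {α : Type*} (l : List (Equiv.Perm α))
    (hl : l.Pairwise Equiv.Perm.Disjoint) {t : Equiv.Perm α} (ht : t ∈ l) (x : α)
    (hx : t x ≠ x) : l.prod x = t x := by
  induction l with
  | nil => simp at ht
  | cons a l ih =>
    obtain ⟨hal, hl'⟩ := List.pairwise_cons.1 hl
    rcases List.mem_cons.1 ht with rfl | ht'
    · have hfix : l.prod x = x := aux_prod_fix _ _ (fun u hu => (hal u hu x).resolve_left hx)
      rw [List.prod_cons, Equiv.Perm.mul_apply, hfix]
    · have hd := hal t ht'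
      have hax : a x = x := (hd x).resolve_right hx
      have h2 : a (t x) = t x := by
        rcases hd (t x) with h | h
        · exact h
        · exact absurd (t.injective h) hx
      rw [List.prod_cons, Equiv.Perm.mul_apply, ih hl' ht', h2]

lemma aux_prod_invol {α : Type*} [DecidableEq α] (l : List (Equiv.Perm α))
    (hl : l.Pairwise Equiv.Perm.Disjoint) (hs : ∀ t ∈ l, t.IsSwap) (x : α) :
    l.prod (l.prod x) = x := by
  by_cases h : ∀ t ∈ l, t x = x
  · rw [aux_prod_fix _ _ h, aux_prod_fix _ _ h]
  · push_neg at h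
    obtain ⟨t, ht, hx⟩ := h
    have h1 : l.prod x = t x := aux_prod_apply_mem l hl ht x hx
    have htt : t (t x) = x := by
      obtain ⟨u, v, -, rfl⟩ := hs t ht
      exact Equiv.swap_apply_self _ _ _
    have h2 : l.prod (t x) = t (t x) := by
      refine aux_prod_apply_mem l hl ht (t x) ?_
      rw [htt]
      exact fun hh => hx hh.symm
    rw [h1, h2, htt]

lemma aux_disjoint_swap {α : Type*} [DecidableEq α] {a b u v : α}
    (h1 : a ≠ u) (h2 : a ≠ v) (h3 : b ≠ u) (h4 : b ≠ v) :
    Equiv.Perm.Disjoint (Equiv.swap a b) (Equiv.swap u v) := by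
  intro x
  by_cases hx : x = a ∨ x = b
  · right
    rcases hx with rfl | rfl
    · exact Equiv.swap_apply_of_ne_of_ne h1 h2
    · exact Equiv.swap_apply_of_ne_of_ne h3 h4
  · push_neg at hx
    left
    exact Equiv.swap_apply_of_ne_of_ne hx.1 hx.2

lemma aux_sum_const (l : List ℕ) (h : ∀ x ∈ l, x = 2) : l.sum = 2 * l.length := by
  induction l with
  | nil => simp
  | cons a l ih =>
    rw [List.sum_cons, ih (fun x hx => h x (List.mem_cons_of_mem _ hx)),
      h a List.mem_cons_self, List.length_cons]
    ring

/-- `IsProdOfDisjointTranspositions π k` : `π` is a product of `k` pairwise disjoint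
transpositions. -/
def IsProdOfDisjointTranspositions {n : ℕ} (π : Equiv.Perm (Fin n)) (k : ℕ) : Prop :=
  ∃ l : List (Equiv.Perm (Fin n)),
    (∀ t ∈ l, t.IsSwap) ∧ l.Pairwise Equiv.Perm.Disjoint ∧ l.length = k ∧ π = l.prod


theorem stmt_2 (n m : ℕ) (hm : 0 < m) (hme : Even m) (hmn : m ≤ n)
    (c : Equiv.Perm (Fin n)) (hc : c.IsCycle) (hcard : c.support.card = m) :
    Nonempty
      ({p : Equiv.Perm (Fin n) × Equiv.Perm (Fin n) //
          c = p.1 * p.2 ∧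
          IsProdOfDisjointTranspositions p.1 (m / 2) ∧ p.1.support ⊆ c.support ∧
          IsProdOfDisjointTranspositions p.2 (m / 2 - 1) ∧ p.2.support ⊆ c.support} ≃
        {s : Finset (Fin n) // ∃ x ∈ c.support, s = {x, (c ^ (m / 2)) x}}) := by
  classical
  obtain ⟨k2, hk2⟩ := hme
  have hm2 : 2 ≤ m := by omega
  haveI : NeZero m := ⟨hm.ne'⟩
  haveI : Fact (1 < m) := ⟨hm2⟩
  -- half
  have hhalf : m / 2 + m / 2 = m := by omega
  -- base point
  obtain ⟨a, ha⟩ : ∃ a, a ∈ c.support := Finset.card_pos.mp (by omega) |>.exists_mem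
  have hco : c.IsCycleOn (c.support : Set (Fin n)) := by
    rw [Equiv.Perm.coe_support_eq_set_support]; exact hc.isCycleOn
  set e : ZMod m → Fin n := fun i => (c ^ i.val) a with he
  have hemem : ∀ i, e i ∈ c.support := fun i => Equiv.Perm.pow_apply_mem_support.2 ha
  have heinj : Function.Injective e := by
    intro i j hij
    have := (hco.pow_apply_eq_pow_apply ha).1 hij
    rw [hcard] at this
    exact ZMod.val_injective m ((Nat.ModEq.eq_of_lt_of_lt this (ZMod.val_lt i) (ZMod.val_lt j)))
  have hesurj : ∀ y ∈ c.support, ∃ i, e i = y := by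
    intro y hy
    obtain ⟨k, hk, hka⟩ := hco.exists_pow_eq ha hy
    rw [hcard] at hk
    exact ⟨(k : ZMod m), by rw [he]; simp only; rw [ZMod.val_cast_of_lt hk]; exact hka⟩
  have hek : ∀ (k : ℕ) (i : ZMod m), (c ^ k) (e i) = e (i + (k : ZMod m)) := by
    intro k i
    show (c ^ k) ((c ^ i.val) a) = (c ^ (i + (k : ZMod m)).val) a
    rw [← Equiv.Perm.mul_apply, ← pow_add]
    rw [hco.pow_apply_eq_pow_apply ha, hcard]
    have h1 : (i + (k : ZMod m)).val ≡ i.val + (k : ZMod m).val [MOD m] := by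
      rw [ZMod.val_add]; exact Nat.mod_modEq _ m
    have h2 : ((k : ZMod m)).val ≡ k [MOD m] := by
      rw [ZMod.val_natCast]; exact Nat.mod_modEq k m
    rw [Nat.add_comm]
    exact (h1.trans (Nat.ModEq.add_left i.val h2)).symm
  have hec : ∀ i, c (e i) = e (i + 1) := by
    intro i
    have := hek 1 i
    rwa [pow_one, Nat.cast_one] at this
  have hecinv : ∀ i, c⁻¹ (e i) = e (i - 1) := by
    intro i
    apply c.injective
    rw [Equiv.Perm.inv_def, Equiv.apply_symm_apply, hec, sub_add_cancel]
  set μ : ZMod m := ((m / 2 : ℕ) : ZMod m) with hμ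
  have hcastinj : ∀ k l : ℕ, k < m → l < m → ((k : ZMod m) = l ↔ k = l) := by
    intro k l hk hl
    constructor
    · intro h
      have := congrArg ZMod.val h
      rwa [ZMod.val_cast_of_lt hk, ZMod.val_cast_of_lt hl] at this
    · rintro rfl; rfl
  have hne0 : ∀ k : ℕ, 0 < k → k < m → (k : ZMod m) ≠ 0 := by
    intro k h1 h2 h
    rw [ZMod.natCast_eq_zero_iff] at h
    exact absurd (Nat.le_of_dvd h1 h) (by omega)
  have hμ0 : μ ≠ 0 := hne0 _ (by omega) (by omega)
  have hμμ : μ + μ = 0 := by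
    rw [hμ, ← Nat.cast_add, hhalf, ZMod.natCast_self]
  have hμneg : -μ = μ := by
    rw [neg_eq_iff_add_eq_zero, hμμ]
  have htwo : ∀ z : ZMod m, z + z = 0 ↔ z = 0 ∨ z = μ := by
    intro z
    constructor
    · intro h
      have hz : z = ((z.val : ℕ) : ZMod m) := (ZMod.natCast_rightInverse z).symm
      rw [hz, ← Nat.cast_add, ZMod.natCast_eq_zero_iff] at h
      have hv := ZMod.val_lt z
      rcases h with ⟨q, hq⟩
      have hql : q < 2 := by
        rcases Nat.lt_or_ge q 2 with h' | h'
        · exact h'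
        · exfalso
          have h2 := Nat.mul_le_mul_left m h'
          rw [← hq] at h2
          omega
      have : q = 0 ∨ q = 1 := by omega
      rcases this with rfl | rfl
      · left; rw [hz]; simp [show z.val = 0 by omega]
      · right; rw [hz, hμ, hcastinj z.val (m / 2) hv (by omega)]; omega
    · rintro (rfl | rfl)
      · simp
      · exact hμμ
  have htwo1 : ∀ z : ZMod m, z + z ≠ 1 := by
    intro z h
    have hv := ZMod.val_lt z
    have hval : (z.val + z.val) % m = 1 := by
      have h2 := congrArg ZMod.val h
      rwa [ZMod.val_add, ZMod.val_one] at h2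
    have hdm := Nat.div_add_mod (z.val + z.val) m
    have hlt : z.val + z.val < m * 2 := by omega
    have h3 : (z.val + z.val) / m ≤ 1 := Nat.lt_succ_iff.mp (Nat.div_lt_of_lt_mul hlt)
    rcases Nat.le_one_iff_eq_zero_or_eq_one.mp h3 with hq | hq <;> rw [hq] at hdm <;> omega
  have hfixout : ∀ (π : Equiv.Perm (Fin n)), π.support ⊆ c.support → ∀ y, y ∉ c.support → π y = y := by
    intro π hsub y hy
    by_contra h
    exact hy (hsub (Equiv.Perm.mem_support.2 h))
  have hclass : ∀ σ τ : Equiv.Perm (Fin n), c = σ * τ →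
      IsProdOfDisjointTranspositions σ (m / 2) → σ.support ⊆ c.support →
      IsProdOfDisjointTranspositions τ (m / 2 - 1) → τ.support ⊆ c.support →
      ∃ z₀ : ZMod m, (∀ i, τ (e i) = e (z₀ + z₀ - i)) ∧ σ = c * τ ∧
        c.support \ τ.support = {e z₀, e (z₀ + μ)} := by
    intro σ τ hceq hσp hσsub hτp hτsub
    obtain ⟨lσ, hlσswap, hlσdisj, hlσlen, hσl⟩ := hσp
    obtain ⟨lτ, hlτswap, hlτdisj, hlτlen, hτl⟩ := hτp
    have hσ2 : ∀ x, σ (σ x) = x := by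
      intro x; rw [hσl]; exact aux_prod_invol _ hlσdisj hlσswap x
    have hτ2 : ∀ x, τ (τ x) = x := by
      intro x; rw [hτl]; exact aux_prod_invol _ hlτdisj hlτswap x
    have hτinv : τ * τ = 1 := by
      ext x
      simp only [Equiv.Perm.mul_apply, Equiv.Perm.one_apply, hτ2]
    have hστ : σ = c * τ := by
      rw [hceq, mul_assoc, hτinv, mul_one]
    have hτσc : ∀ x, τ x = σ (c x) := by
      intro x
      rw [hceq]
      simp only [Equiv.Perm.mul_apply]
      rw [hσ2]
    have hτcinv : ∀ x, τ x = c⁻¹ (σ x) := by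
      intro x
      rw [hστ]
      simp only [Equiv.Perm.mul_apply, Equiv.Perm.inv_def, Equiv.symm_apply_apply]
    have hτmem : ∀ y ∈ c.support, τ y ∈ c.support := by
      intro y hy
      by_cases h : τ y = y
      · rwa [h]
      · exact hτsub (Equiv.Perm.mem_support.2 (fun hh => h (τ.injective hh)))
    obtain ⟨b, hb⟩ := hesurj (τ (e 0)) (hτmem _ (hemem 0))
    have hτe : ∀ k : ℕ, τ (e (k : ZMod m)) = e (b - (k : ZMod m)) := by
      intro k
      induction k with
      | zero => simpa using hb.symm
      | succ k ih =>
        have hcast : ((k + 1 : ℕ) : ZMod m) = ((k : ℕ) : ZMod m) + 1 := by push_cast; ring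
        rw [hcast]
        calc τ (e ((k : ZMod m) + 1)) = τ (c (e (k : ZMod m))) := by rw [hec]
          _ = c⁻¹ (σ (c (e (k : ZMod m)))) := hτcinv _
          _ = c⁻¹ (τ (e (k : ZMod m))) := by rw [← hτσc]
          _ = c⁻¹ (e (b - (k : ZMod m))) := by rw [ih]
          _ = e (b - (k : ZMod m) - 1) := hecinv _
          _ = e (b - ((k : ZMod m) + 1)) := by ring_nf
    have hτeall : ∀ i : ZMod m, τ (e i) = e (b - i) := by
      intro i
      have h0 : ((i.val : ℕ) : ZMod m) = i := ZMod.natCast_rightInverse i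
      have := hτe i.val
      rwa [h0] at this
    have hτcard : τ.support.card = m - 2 := by
      rw [hτl, card_support_prod_list_of_pairwise_disjoint hlτdisj]
      have h2 : ∀ x ∈ lτ.map (Finset.card ∘ Equiv.Perm.support), x = 2 := by
        intro x hx
        obtain ⟨t, ht, rfl⟩ := List.mem_map.1 hx
        obtain ⟨u, v, huv, rfl⟩ := hlτswap t ht
        simp [Function.comp, Equiv.Perm.card_support_swap huv]
      rw [aux_sum_const _ h2, List.length_map, hlτlen]
      omega
    have hsd : (c.support \ τ.support).card = 2 := by
      rw [Finset.card_sdiff_of_subset hτsub, hcard, hτcard]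
      omega
    obtain ⟨x0, hx0⟩ := Finset.card_pos.mp (by omega : 0 < (c.support \ τ.support).card)
    obtain ⟨hx0c, hx0τ⟩ := Finset.mem_sdiff.1 hx0
    obtain ⟨z₀, rfl⟩ := hesurj x0 hx0c
    have hfix0 : τ (e z₀) = e z₀ := Equiv.Perm.notMem_support.1 hx0τ
    have hbz : b = z₀ + z₀ := by
      have h2 : b - z₀ = z₀ := heinj ((hτeall z₀).symm.trans hfix0)
      rwa [sub_eq_iff_eq_add] at h2
    refine ⟨z₀, ?_, hστ, ?_⟩
    · intro i
      rw [hτeall, hbz]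
    · have hne2 : e z₀ ≠ e (z₀ + μ) := by
        intro h
        exact hμ0 (left_eq_add.mp (heinj h))
      have hmem2 : e (z₀ + μ) ∈ c.support \ τ.support := by
        rw [Finset.mem_sdiff]
        refine ⟨hemem _, Equiv.Perm.notMem_support.2 ?_⟩
        rw [hτeall, hbz]
        congr 1
        linear_combination -hμμ
      refine (Finset.eq_of_subset_of_card_le ?_ ?_).symm
      · intro y hy
        rcases Finset.mem_insert.1 hy with rfl | hy'
        · exact hx0
        · rw [Finset.mem_singleton.1 hy']
          exact hmem2
      · rw [hsd, Finset.card_pair hne2]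
  -- generic inequality helpers
  have hEne : ∀ u v : ZMod m, u ≠ v → e u ≠ e v := fun u v h hh => h (heinj hh)
  have hA : ∀ (w : ZMod m) (k l : ℕ), k < m → l < m → k ≠ l →
      w + (k : ZMod m) ≠ w + (l : ZMod m) := by
    intro w k l hk hl hkl h
    exact hkl ((hcastinj k l hk hl).1 (by linear_combination h))
  have hB : ∀ (w : ZMod m) (k l : ℕ), 0 < k + l → k + l < m →
      w + (k : ZMod m) ≠ w - (l : ZMod m) := by
    intro w k l h1 h2 h
    refine hne0 (k + l) h1 h2 ?_
    push_cast
    linear_combination h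
  have hC : ∀ (w : ZMod m) (k l : ℕ), k < m → l < m → k ≠ l →
      w - (k : ZMod m) ≠ w - (l : ZMod m) := by
    intro w k l hk hl hkl h
    exact hkl ((hcastinj k l hk hl).1 (by linear_combination -h))
  have hD : ∀ (w : ZMod m) (k : ℕ), 0 < k → k < m → w ≠ w + (k : ZMod m) := by
    intro w k h1 h2 h
    exact hne0 k h1 h2 (by linear_combination -h)
  have hE : ∀ (w : ZMod m) (k : ℕ), 0 < k → k < m → w ≠ w - (k : ZMod m) := by
    intro w k h1 h2 h
    exact hne0 k h1 h2 (by linear_combination h)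
  -- the construction of the decomposition attached to j
  have hconstr : ∀ j : ZMod m,
      ∃ σ τ : Equiv.Perm (Fin n), c = σ * τ ∧
        IsProdOfDisjointTranspositions σ (m / 2) ∧ σ.support ⊆ c.support ∧
        IsProdOfDisjointTranspositions τ (m / 2 - 1) ∧ τ.support ⊆ c.support ∧
        (∀ i, τ (e i) = e (j + j - i)) := by
    intro j
    set Lσ : List (Equiv.Perm (Fin n)) :=
      (List.range (m / 2)).map
        (fun t => Equiv.swap (e (j + ((t + 1 : ℕ) : ZMod m))) (e (j - ((t : ℕ) : ZMod m))))
      with hLσ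
    set Lτ : List (Equiv.Perm (Fin n)) :=
      (List.range (m / 2 - 1)).map
        (fun t => Equiv.swap (e (j + ((t + 1 : ℕ) : ZMod m))) (e (j - ((t + 1 : ℕ) : ZMod m))))
      with hLτ
    have hσmem' : ∀ t : ℕ, t < m / 2 →
        Equiv.swap (e (j + ((t + 1 : ℕ) : ZMod m))) (e (j - ((t : ℕ) : ZMod m))) ∈ Lσ := by
      intro t ht
      exact List.mem_map_of_mem (List.mem_range.2 ht)
    have hτmem' : ∀ t : ℕ, t < m / 2 - 1 →
        Equiv.swap (e (j + ((t + 1 : ℕ) : ZMod m))) (e (j - ((t + 1 : ℕ) : ZMod m))) ∈ Lτ := by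
      intro t ht
      exact List.mem_map_of_mem (List.mem_range.2 ht)
    have hLσswap : ∀ t ∈ Lσ, Equiv.Perm.IsSwap t := by
      intro t ht
      obtain ⟨u, hu, rfl⟩ := List.mem_map.1 ht
      rw [List.mem_range] at hu
      exact ⟨_, _, hEne _ _ (hB j (u + 1) u (by omega) (by omega)), rfl⟩
    have hLτswap : ∀ t ∈ Lτ, Equiv.Perm.IsSwap t := by
      intro t ht
      obtain ⟨u, hu, rfl⟩ := List.mem_map.1 ht
      rw [List.mem_range] at hu
      exact ⟨_, _, hEne _ _ (hB j (u + 1) (u + 1) (by omega) (by omega)), rfl⟩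
    have hLσdisj : Lσ.Pairwise Equiv.Perm.Disjoint := by
      rw [hLσ, List.pairwise_map]
      refine List.Pairwise.imp_of_mem ?_ List.pairwise_lt_range
      intro u v hu hv huv
      rw [List.mem_range] at hu hv
      exact aux_disjoint_swap
        (hEne _ _ (hA j (u + 1) (v + 1) (by omega) (by omega) (by omega)))
        (hEne _ _ (hB j (u + 1) v (by omega) (by omega)))
        ((hEne _ _ (hB j (v + 1) u (by omega) (by omega))).symm)
        (hEne _ _ (hC j u v (by omega) (by omega) (by omega)))
    have hLτdisj : Lτ.Pairwise Equiv.Perm.Disjoint := by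
      rw [hLτ, List.pairwise_map]
      refine List.Pairwise.imp_of_mem ?_ List.pairwise_lt_range
      intro u v hu hv huv
      rw [List.mem_range] at hu hv
      exact aux_disjoint_swap
        (hEne _ _ (hA j (u + 1) (v + 1) (by omega) (by omega) (by omega)))
        (hEne _ _ (hB j (u + 1) (v + 1) (by omega) (by omega)))
        ((hEne _ _ (hB j (v + 1) (u + 1) (by omega) (by omega))).symm)
        (hEne _ _ (hC j (u + 1) (v + 1) (by omega) (by omega) (by omega)))
    have hcastval : ∀ w : ZMod m, ((w.val : ℕ) : ZMod m) = w :=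
      fun w => ZMod.natCast_rightInverse w
    -- action of Lτ.prod on the orbit
    have hτact : ∀ i : ZMod m, Lτ.prod (e i) = e (j + j - i) := by
      intro i
      have hid : i = j + (i - j) := by ring
      set d : ZMod m := i - j with hd
      by_cases h0 : d = 0
      · rw [show i = j from by rw [hid, h0, add_zero], show j + j - j = j from by ring]
        refine aux_prod_fix _ _ ?_
        intro t ht
        obtain ⟨u, hu, rfl⟩ := List.mem_map.1 ht
        rw [List.mem_range] at hu
        exact Equiv.swap_apply_of_ne_of_ne
          (hEne _ _ (hD j (u + 1) (by omega) (by omega)))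
          (hEne _ _ (hE j (u + 1) (by omega) (by omega)))
      by_cases hμd : d = μ
      · rw [show i = j + ((m / 2 : ℕ) : ZMod m) from by rw [hid, hμd, hμ],
          show j + j - (j + ((m / 2 : ℕ) : ZMod m)) = j + ((m / 2 : ℕ) : ZMod m) from by
            have : ((m / 2 : ℕ) : ZMod m) + ((m / 2 : ℕ) : ZMod m) = 0 := by rw [← hμ]; exact hμμ
            linear_combination -this]
        refine aux_prod_fix _ _ ?_
        intro t ht
        obtain ⟨u, hu, rfl⟩ := List.mem_map.1 ht
        rw [List.mem_range] at hu
        exact Equiv.swap_apply_of_ne_of_ne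
          (hEne _ _ (hA j (m / 2) (u + 1) (by omega) (by omega) (by omega)))
          (hEne _ _ (hB j (m / 2) (u + 1) (by omega) (by omega)))
      · have hv1 : 0 < d.val := by
          rcases Nat.eq_zero_or_pos d.val with h | h
          · exact absurd ((ZMod.val_eq_zero d).1 h) h0
          · exact h
        have hvm := ZMod.val_lt d
        have hvne : d.val ≠ m / 2 := by
          intro h
          apply hμd
          rw [← hcastval d, h, ← hμ]
        have hdd0 : d + d ≠ 0 := by
          intro h
          rcases (htwo d).1 h with h' | h'
          · exact h0 h'
          · exact hμd h'
        rcases Nat.lt_or_ge d.val (m / 2) with hlt | hge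
        · have hswap := hτmem' (d.val - 1) (by omega)
          rw [show d.val - 1 + 1 = d.val from by omega, hcastval d] at hswap
          have happ : Lτ.prod (e i) = Equiv.swap (e (j + d)) (e (j - d)) (e i) := by
            refine aux_prod_apply_mem _ hLτdisj hswap _ ?_
            rw [← hid, hid, Equiv.swap_apply_left]
            exact (hEne _ _ (fun h => hdd0 (by linear_combination h))).symm
          rw [happ, hid, Equiv.swap_apply_left]
          congr 1
          rw [hd]
          ring
        · have hswap := hτmem' (m - d.val - 1) (by omega)
          rw [show m - d.val - 1 + 1 = m - d.val from by omega] at hswap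
          have hcast2 : ((m - d.val : ℕ) : ZMod m) = -d := by
            rw [Nat.cast_sub (le_of_lt hvm), hcastval d, ZMod.natCast_self]
            ring
          rw [hcast2, show j + -d = j - d from by ring, show j - -d = j + d from by ring]
            at hswap
          have happ : Lτ.prod (e i) = Equiv.swap (e (j - d)) (e (j + d)) (e i) := by
            refine aux_prod_apply_mem _ hLτdisj hswap _ ?_
            rw [hid, Equiv.swap_apply_right]
            exact hEne _ _ (fun h => hdd0 (by linear_combination -h))
          rw [happ, hid, Equiv.swap_apply_right]
          congr 1
          rw [hd]
          ring
    -- action of Lσ.prod on the orbit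
    have hσact : ∀ i : ZMod m, Lσ.prod (e i) = e (j + j + 1 - i) := by
      intro i
      have hid : i = j + (i - j) := by ring
      set d : ZMod m := i - j with hd
      have hvm := ZMod.val_lt d
      have hdd1 : j - d + 1 ≠ j + d := by
        intro h
        exact htwo1 d (by linear_combination -h)
      rcases Nat.lt_or_ge 0 d.val with hv1 | hv0
      swap
      · -- d.val = 0, i.e. i = j
        have h0 : d = 0 := (ZMod.val_eq_zero d).1 (by omega)
        have hswap := hσmem' 0 (by omega)
        rw [show ((0 : ℕ) : ZMod m) = 0 from by simp, show j - 0 = j from by ring] at hswap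
        have hij : i = j := by rw [hid, h0, add_zero]
        have happ : Lσ.prod (e i) =
            Equiv.swap (e (j + ((0 + 1 : ℕ) : ZMod m))) (e j) (e i) := by
          refine aux_prod_apply_mem _ hLσdisj hswap _ ?_
          rw [hij, Equiv.swap_apply_right]
          exact hEne _ _ (hD j 1 (by omega) (by omega)).symm
        rw [happ, hij, Equiv.swap_apply_right]
        congr 1
        rw [show ((0 + 1 : ℕ) : ZMod m) = 1 from by norm_num]
        ring
      rcases Nat.lt_or_ge (m / 2) d.val with hge | hle
      · -- d.val > m/2
        have hswap := hσmem' (m - d.val) (by omega)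
        have hcast2 : ((m - d.val : ℕ) : ZMod m) = -d := by
          rw [Nat.cast_sub (le_of_lt hvm), hcastval d, ZMod.natCast_self]
          ring
        have hcast3 : ((m - d.val + 1 : ℕ) : ZMod m) = -d + 1 := by
          push_cast [Nat.cast_sub (le_of_lt hvm)]
          rw [hcastval d, ZMod.natCast_self]
          ring
        rw [hcast2, hcast3, show j + (-d + 1) = j - d + 1 from by ring,
          show j - -d = j + d from by ring] at hswap
        have happ : Lσ.prod (e i) = Equiv.swap (e (j - d + 1)) (e (j + d)) (e i) := by
          refine aux_prod_apply_mem _ hLσdisj hswap _ ?_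
          rw [hid, Equiv.swap_apply_right]
          exact hEne _ _ hdd1
        rw [happ, hid, Equiv.swap_apply_right]
        congr 1
        rw [hd]
        ring
      · -- 1 ≤ d.val ≤ m/2
        have hswap := hσmem' (d.val - 1) (by omega)
        have hcast4 : ((d.val - 1 + 1 : ℕ) : ZMod m) = d := by
          rw [show d.val - 1 + 1 = d.val from by omega, hcastval d]
        have hcast5 : ((d.val - 1 : ℕ) : ZMod m) = d - 1 := by
          push_cast [Nat.cast_sub (show 1 ≤ d.val from hv1)]
          rw [hcastval d]
        rw [hcast4, hcast5, show j - (d - 1) = j - d + 1 from by ring] at hswap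
        have happ : Lσ.prod (e i) = Equiv.swap (e (j + d)) (e (j - d + 1)) (e i) := by
          refine aux_prod_apply_mem _ hLσdisj hswap _ ?_
          rw [hid, Equiv.swap_apply_left]
          exact hEne _ _ hdd1
        rw [happ, hid, Equiv.swap_apply_left]
        congr 1
        rw [hd]
        ring
    -- fixing points outside the support
    have hσfix : ∀ y, y ∉ c.support → Lσ.prod y = y := by
      intro y hy
      refine aux_prod_fix _ _ ?_
      intro t ht
      obtain ⟨u, hu, rfl⟩ := List.mem_map.1 ht
      exact Equiv.swap_apply_of_ne_of_ne
        (fun h => hy (h ▸ hemem _)) (fun h => hy (h ▸ hemem _))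
    have hτfix : ∀ y, y ∉ c.support → Lτ.prod y = y := by
      intro y hy
      refine aux_prod_fix _ _ ?_
      intro t ht
      obtain ⟨u, hu, rfl⟩ := List.mem_map.1 ht
      exact Equiv.swap_apply_of_ne_of_ne
        (fun h => hy (h ▸ hemem _)) (fun h => hy (h ▸ hemem _))
    refine ⟨Lσ.prod, Lτ.prod, ?_, ⟨Lσ, hLσswap, hLσdisj, by simp [hLσ], rfl⟩, ?_,
      ⟨Lτ, hLτswap, hLτdisj, by simp [hLτ], rfl⟩, ?_, hτact⟩
    · ext y
      by_cases hy : y ∈ c.support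
      · obtain ⟨i, rfl⟩ := hesurj y hy
        rw [Equiv.Perm.mul_apply, hτact, hσact, hec]
        congr 1
        ring
      · rw [Equiv.Perm.mul_apply, hτfix _ hy, hσfix _ hy,
          Equiv.Perm.notMem_support.1 hy]
    · intro x hx
      by_contra hxc
      exact (Equiv.Perm.mem_support.1 hx) (hσfix x hxc)
    · intro x hx
      by_contra hxc
      exact (Equiv.Perm.mem_support.1 hx) (hτfix x hxc)
  have hμpow : ∀ i : ZMod m, (c ^ (m / 2)) (e i) = e (i + μ) := by
    intro i
    rw [hμ]
    exact hek (m / 2) i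
  have hprop : ∀ p : Equiv.Perm (Fin n) × Equiv.Perm (Fin n),
      (c = p.1 * p.2 ∧
        IsProdOfDisjointTranspositions p.1 (m / 2) ∧ p.1.support ⊆ c.support ∧
        IsProdOfDisjointTranspositions p.2 (m / 2 - 1) ∧ p.2.support ⊆ c.support) →
      ∃ x ∈ c.support, c.support \ p.2.support = {x, (c ^ (m / 2)) x} := by
    intro p hp
    obtain ⟨z₀, hform, hstau, hset⟩ :=
      hclass p.1 p.2 hp.1 hp.2.1 hp.2.2.1 hp.2.2.2.1 hp.2.2.2.2
    refine ⟨e z₀, hemem z₀, ?_⟩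
    rw [hset, hμpow]
  refine ⟨Equiv.ofBijective
    (fun p => ⟨c.support \ p.1.2.support, hprop p.1 p.2⟩) ⟨?_, ?_⟩⟩
  · rintro ⟨⟨σ₁, τ₁⟩, h1⟩ ⟨⟨σ₂, τ₂⟩, h2⟩ hF
    simp only [Subtype.mk.injEq] at hF
    obtain ⟨z₁, hf1, hs1, hset1⟩ :=
      hclass σ₁ τ₁ h1.1 h1.2.1 h1.2.2.1 h1.2.2.2.1 h1.2.2.2.2
    obtain ⟨z₂, hf2, hs2, hset2⟩ :=
      hclass σ₂ τ₂ h2.1 h2.2.1 h2.2.2.1 h2.2.2.2.1 h2.2.2.2.2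
    have hpair : ({e z₁, e (z₁ + μ)} : Finset (Fin n)) = {e z₂, e (z₂ + μ)} := by
      rw [← hset1, ← hset2]
      exact hF
    have hz2mem : e z₂ ∈ ({e z₁, e (z₁ + μ)} : Finset (Fin n)) :=
      hpair ▸ Finset.mem_insert_self _ _
    have hzz : z₂ + z₂ = z₁ + z₁ := by
      rcases Finset.mem_insert.1 hz2mem with h | h
      · rw [heinj h]
      · have h9 := heinj (Finset.mem_singleton.1 h)
        rw [h9]
        linear_combination hμμ
    have hτeq : τ₁ = τ₂ := by
      ext y
      by_cases hy : y ∈ c.support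
      · obtain ⟨i, rfl⟩ := hesurj y hy
        rw [hf1, hf2, hzz]
      · rw [hfixout τ₁ h1.2.2.2.2 y hy, hfixout τ₂ h2.2.2.2.2 y hy]
    have hσeq : σ₁ = σ₂ := by rw [hs1, hs2, hτeq]
    exact Subtype.ext (by simp [Prod.ext_iff, hσeq, hτeq])
  · rintro ⟨s, hs⟩
    obtain ⟨x, hx, rfl⟩ := hs
    obtain ⟨jz, rfl⟩ := hesurj x hx
    obtain ⟨σ, τ, hceq, hσp, hσsub, hτp, hτsub, hτform⟩ := hconstr jz
    refine ⟨⟨(σ, τ), hceq, hσp, hσsub, hτp, hτsub⟩, ?_⟩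
    apply Subtype.ext
    obtain ⟨z₀, hform, hstau, hset⟩ := hclass σ τ hceq hσp hσsub hτp hτsub
    have h9 : z₀ + z₀ - jz = jz + jz - jz := heinj ((hform jz).symm.trans (hτform jz))
    have hzz : z₀ + z₀ = jz + jz := by linear_combination h9
    have hcases : z₀ = jz ∨ z₀ = jz + μ := by
      rcases (htwo (z₀ - jz)).1 (by linear_combination hzz) with h | h
      · left; linear_combination h
      · right; linear_combination h
    show c.support \ τ.support = {e jz, (c ^ (m / 2)) (e jz)}
    rw [hset, hμpow]
    rcases hcases with h | h
    · rw [h]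
    · rw [h, show jz + μ + μ = jz from by linear_combination hμμ]
      exact Finset.pair_comm _ _
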